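/- Let r₂ be a real number with r₂ < 0 and set s = √(−3r₂). For all real u and v with u ≠ 0, v ≠ 0, u + v ≠ 0 and u − v ≠ 0 (so in particular ℘_d(u) ≠ ℘_d(v)), the degenerate addition law holds: ℘_d(u + v) + ℘_d(u) + ℘_d(v) = (1/4)·((℘_d'(u) − ℘_d'(v))/(℘_d(u) − ℘_d(v)))², where ℘_d'(ξ) = −2·(−3r₂)^(3/2)·cosh(s·ξ)/sinh(s·ξ)³. -/

import Mathlib

/-- Degenerate Weierstrass ℘-function `℘_d(ξ) = −r₂ − 3r₂/sinh(sξ)²`, `s = √(−3r₂)`. -/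
noncomputable def pd (r₂ ξ : ℝ) : ℝ :=
  -r₂ - 3*r₂ / (Real.sinh (Real.sqrt (-3*r₂) * ξ))^2

/-- Its derivative `℘_d'(ξ) = −2(−3r₂)^(3/2)·cosh(sξ)/sinh(sξ)³`. -/
noncomputable def pd' (r₂ ξ : ℝ) : ℝ :=
  -2*(-3*r₂)^((3:ℝ)/2) * Real.cosh (Real.sqrt (-3*r₂) * ξ) /
    (Real.sinh (Real.sqrt (-3*r₂) * ξ))^3

/-- Degenerate Weierstrass ζ-function `ζ_d(ξ) = r₂ξ + s·coth(sξ)`, `s = √(−3r₂)`. -/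
noncomputable def zd (r₂ ξ : ℝ) : ℝ :=
  r₂*ξ + Real.sqrt (-3*r₂) *
    (Real.cosh (Real.sqrt (-3*r₂) * ξ) / Real.sinh (Real.sqrt (-3*r₂) * ξ))

/-- Degenerate Weierstrass σ-function `σ_d(ξ) = exp(r₂ξ²/2)·sinh(sξ)/s`, `s = √(−3r₂)`. -/
noncomputable def sd (r₂ ξ : ℝ) : ℝ :=
  Real.exp (r₂*ξ^2/2) * Real.sinh (Real.sqrt (-3*r₂) * ξ) / Real.sqrt (-3*r₂)

set_option maxHeartbeats 1000000 in
lemma key_poly_stmt19 (A B C D : ℝ) (hC : C^2 = 1 + A^2) (hD : D^2 = 1 + B^2) :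
    (A^2*B^2*((A*D+C*B)^2+1) + (A*D+C*B)^2*(A^2+B^2))*(B^2-A^2)^2
      = (A*D+C*B)^2*(C*B^3-D*A^3)^2 := by
  linear_combination
    (-B^8*C^2 - 2*A*B^7*C*D - A^2*B^6 - A^2*B^6*D^2 + 2*A^3*B^5*C*D - A^4*B^4
      + 4*A^4*B^4*D^2 - 2*A^4*B^6 + A^6*B^2 - A^6*B^2*D^2 + A^6*B^4) * hC +
    (3*A^4*B^4 + 2*A^5*B^3*C*D - 2*A^6*B^2 + 2*A^6*B^4 - 2*A^7*B*C*D
      - A^8*D^2 - A^8*B^2) * hD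

set_option maxHeartbeats 1000000 in
lemma key2_stmt19 (A B C D s : ℝ) (hs : s ≠ 0) (hA : A ≠ 0) (hB : B ≠ 0)
    (hE : A*D + C*B ≠ 0) (hAB : B^2 - A^2 ≠ 0)
    (hC : C^2 = 1 + A^2) (hD : D^2 = 1 + B^2) :
    (s^2/3 + s^2/(A*D+C*B)^2) + (s^2/3 + s^2/A^2) + (s^2/3 + s^2/B^2) =
      (1/4) * (((-2*s^3*C/A^3) - (-2*s^3*D/B^3)) /
        ((s^2/3 + s^2/A^2) - (s^2/3 + s^2/B^2)))^2 := by
  have h9 : (s^2/3 + s^2/A^2) - (s^2/3 + s^2/B^2) = s^2*(B^2-A^2)/(A^2*B^2) := by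
    field_simp; ring
  have h8 : (-2*s^3*C/A^3) - (-2*s^3*D/B^3) = -2*s^3*(C*B^3-D*A^3)/(A^3*B^3) := by
    field_simp; ring
  rw [h9, h8]
  have h := key_poly_stmt19 A B C D hC hD
  field_simp
  linear_combination (12) * h

/-- Degenerate addition law:
`℘_d(u+v) + ℘_d(u) + ℘_d(v) = (1/4)·((℘_d'(u) − ℘_d'(v))/(℘_d(u) − ℘_d(v)))²`. -/
theorem stmt_19 (r₂ : ℝ) (hr : r₂ < 0) (u v : ℝ) (hu : u ≠ 0) (hv : v ≠ 0)
    (huv : u + v ≠ 0) (huv' : u - v ≠ 0) :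
    pd r₂ (u + v) + pd r₂ u + pd r₂ v =
      (1/4) * ((pd' r₂ u - pd' r₂ v) / (pd r₂ u - pd r₂ v))^2 := by
  set s := Real.sqrt (-3*r₂) with hsdef
  have h3 : (0:ℝ) < -3*r₂ := by linarith
  have hs0 : 0 < s := Real.sqrt_pos.mpr h3
  have hs2 : s^2 = -3*r₂ := Real.sq_sqrt h3.le
  set A := Real.sinh (s*u) with hAdef
  set B := Real.sinh (s*v) with hBdef
  set C := Real.cosh (s*u) with hCdef
  set D := Real.cosh (s*v) with hDdef
  have hA : A ≠ 0 := by
    simp [hAdef, Real.sinh_eq_zero, hs0.ne', hu, mul_eq_zero]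
  have hB : B ≠ 0 := by
    simp [hBdef, Real.sinh_eq_zero, hs0.ne', hv, mul_eq_zero]
  have hEeq : Real.sinh (s*(u+v)) = A*D + C*B := by
    rw [mul_add, Real.sinh_add]
  have hE : A*D + C*B ≠ 0 := by
    rw [← hEeq]
    simp [Real.sinh_eq_zero, hs0.ne', huv, mul_eq_zero]
  have hAB : B^2 - A^2 ≠ 0 := by
    intro hcon
    have hABsq : (B - A) * (B + A) = 0 := by linarith [hcon]
    rcases mul_eq_zero.mp hABsq with h | h
    · have : A = B := by linarith
      have := Real.sinh_injective (hAdef ▸ hBdef ▸ this)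
      have : u = v := mul_left_cancel₀ hs0.ne' this
      exact huv' (by linarith)
    · have : B = -A := by linarith
      have hBA : Real.sinh (s*v) = Real.sinh (-(s*u)) := by
        rw [Real.sinh_neg]; rw [← hAdef, ← hBdef]; linarith
      have := Real.sinh_injective hBA
      have : s*(u+v) = 0 := by rw [mul_add]; linarith
      exact huv (by
        rcases mul_eq_zero.mp this with h' | h'
        · exact absurd h' hs0.ne'
        · exact h')
  have hC2 : C^2 = 1 + A^2 := by
    rw [hCdef, hAdef, Real.cosh_sq]; ring
  have hD2 : D^2 = 1 + B^2 := by
    rw [hDdef, hBdef, Real.cosh_sq]; ring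
  have h32 : (-3*r₂)^((3:ℝ)/2) = s^3 := by
    rw [hsdef, Real.sqrt_eq_rpow, ← Real.rpow_natCast _ 3, ← Real.rpow_mul h3.le]
    norm_num
  have e1 : pd r₂ u = s^2/3 + s^2/A^2 := by
    simp only [pd, ← hsdef, ← hAdef]; rw [hs2]; ring
  have e2 : pd r₂ v = s^2/3 + s^2/B^2 := by
    simp only [pd, ← hsdef, ← hBdef]; rw [hs2]; ring
  have e3 : pd r₂ (u+v) = s^2/3 + s^2/(A*D+C*B)^2 := by
    simp only [pd, ← hsdef, hEeq]; rw [hs2]; ring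
  have e4 : pd' r₂ u = -2*s^3*C/A^3 := by
    simp only [pd', ← hsdef, ← hAdef, ← hCdef, h32]
  have e5 : pd' r₂ v = -2*s^3*D/B^3 := by
    simp only [pd', ← hsdef, ← hBdef, ← hDdef, h32]
  rw [e1, e2, e3, e4, e5]
  exact key2_stmt19 A B C D s hs0.ne' hA hB hE hAB hC2 hD2
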